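/- Let M be a hyperfinite II₁ factor written as the weak closure of an ascending sequence of subfactors M_n ≅ M_{2^n}(ℂ) with M = M_n ⊗̄ (M_n' ∩ M) for every n, and let N ⊆ M be a von Neumann subalgebra such that no corner of M embeds into N inside M (M ⊀_M N). Then for every n, no corner of the relative commutant M_n' ∩ M embeds into N inside M (M_n' ∩ M ⊀_M N). -/

import Mathlib

open scoped ComplexOrder
open Filter

namespace PopaQ

variable {H : Type u} [NormedAddCommGroup H] [InnerProductSpace ℂ H] [CompleteSpace H]

/-- Bounded operators on `H`. -/
abbrev Op (H : Type u) [NormedAddCommGroup H] [InnerProductSpace ℂ H] [CompleteSpace H] :=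
  H →L[ℂ] H

/-- The relative commutant `N' ∩ M` (as sets of operators). -/
def relComm (N M : Set (Op H)) : Set (Op H) :=
  {x | x ∈ M ∧ ∀ y ∈ N, y * x = x * y}

/-- The scalar operators `ℂ 1`. -/
def scalars (H : Type u) [NormedAddCommGroup H] [InnerProductSpace ℂ H] [CompleteSpace H] :
    Set (Op H) :=
  {x | ∃ c : ℂ, x = c • (1 : Op H)}

/-- A (self-adjoint) projection. -/
def IsProjection (p : Op H) : Prop :=
  IsSelfAdjoint p ∧ IsIdempotentElem p

/-- `τ` is a faithful tracial state on `M`. -/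
structure IsTracialState (M : Set (Op H)) (τ : Op H →ₗ[ℂ] ℂ) : Prop where
  map_one : τ 1 = 1
  tracial : ∀ x ∈ M, ∀ y ∈ M, τ (x * y) = τ (y * x)
  pos : ∀ x ∈ M, 0 ≤ τ (star x * x)
  faithful : ∀ x ∈ M, τ (star x * x) = 0 → x = 0

/-- A set of operators is finite dimensional as a complex vector space. -/
def FinDim (S : Set (Op H)) : Prop :=
  ∃ s : Finset (Op H), S ⊆ (Submodule.span ℂ (s : Set (Op H)) : Set (Op H))

/-- `M` is a II₁ factor with faithful normal trace `τ`:
a factor (trivial center) carrying a faithful tracial state, which is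
infinite dimensional. -/
structure IsII1Factor (M : VonNeumannAlgebra H) (τ : Op H →ₗ[ℂ] ℂ) : Prop where
  factor : relComm (M : Set (Op H)) (M : Set (Op H)) = scalars H
  trace : IsTracialState (M : Set (Op H)) τ
  infdim : ¬ FinDim (M : Set (Op H))

/-- `M` is hyperfinite: it is the (weak closure = double commutant) of an increasing
union of finite-dimensional *-subalgebras. -/
def IsHyperfinite (M : VonNeumannAlgebra H) : Prop :=
  ∃ A : ℕ → StarSubalgebra ℂ (Op H),
    Monotone A ∧ (∀ n, (A n : Set (Op H)) ⊆ M) ∧ (∀ n, FinDim (A n : Set (Op H))) ∧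
    Set.centralizer (Set.centralizer (⋃ n, (A n : Set (Op H)))) = (M : Set (Op H))

/-- A bounded sequence of operators. -/
def Bdd (x : ℕ → Op H) : Prop :=
  ∃ C : ℝ, ∀ n, ‖x n‖ ≤ C

/-- A sequence taking values in `S`. -/
def SeqIn (S : Set (Op H)) (x : ℕ → Op H) : Prop :=
  ∀ n, x n ∈ S

/-- A free ultrafilter on ℕ. -/
def IsFreeUltrafilter (ω : Ultrafilter ℕ) : Prop :=
  ∀ s : Set ℕ, s.Finite → s ∉ ω

/-- `Mω` is the tracial ultrapower of `M` along `ω`, with trace `τ`;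
`limω` assigns to each bounded sequence in `M` its class in `Mω` (the diagonal
embedding of `M` into `Mω` being the identity on `M`). -/
structure IsTracialUltrapower (ω : Ultrafilter ℕ) (M Mω : VonNeumannAlgebra H)
    (τ : Op H →ₗ[ℂ] ℂ) (limω : (ℕ → Op H) → Op H) : Prop where
  subset : (M : Set (Op H)) ⊆ (Mω : Set (Op H))
  mem : ∀ x, SeqIn (M : Set (Op H)) x → Bdd x → limω x ∈ Mω
  diag : ∀ m ∈ M, limω (fun _ => m) = m
  map_add : ∀ x y, SeqIn (M : Set (Op H)) x → Bdd x → SeqIn (M : Set (Op H)) y → Bdd y →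
    limω (fun n => x n + y n) = limω x + limω y
  map_mul : ∀ x y, SeqIn (M : Set (Op H)) x → Bdd x → SeqIn (M : Set (Op H)) y → Bdd y →
    limω (fun n => x n * y n) = limω x * limω y
  map_smul : ∀ (c : ℂ) x, SeqIn (M : Set (Op H)) x → Bdd x →
    limω (fun n => c • x n) = c • limω x
  map_star : ∀ x, SeqIn (M : Set (Op H)) x → Bdd x →
    limω (fun n => star (x n)) = star (limω x)
  surj : ∀ z ∈ Mω, ∃ x, SeqIn (M : Set (Op H)) x ∧ Bdd x ∧ limω x = z
  tr : ∀ x, SeqIn (M : Set (Op H)) x → Bdd x →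
    Tendsto (fun n => τ (x n)) (ω : Filter ℕ) (nhds (τ (limω x)))
  eq_zero : ∀ x, SeqIn (M : Set (Op H)) x → Bdd x →
    (limω x = 0 ↔ Tendsto (fun n => ‖τ (star (x n) * x n)‖) (ω : Filter ℕ) (nhds 0))
  traceState : IsTracialState (Mω : Set (Op H)) τ

/-- The ultrapower `N^ω ⊆ M^ω` of a subalgebra `N ⊆ M`: classes of bounded
sequences with entries in `N`. -/
def ultrapowerSet (limω : (ℕ → Op H) → Op H) (N : Set (Op H)) : Set (Op H) :=
  {z | ∃ x, SeqIn N x ∧ Bdd x ∧ limω x = z}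

/-- `θ` is a *-homomorphism from `S` to `T` (as sets of operators). -/
def IsStarHomOn (θ : Op H → Op H) (S T : Set (Op H)) : Prop :=
  (∀ x ∈ S, θ x ∈ T) ∧
  (∀ x ∈ S, ∀ y ∈ S, θ (x + y) = θ x + θ y) ∧
  (∀ x ∈ S, ∀ y ∈ S, θ (x * y) = θ x * θ y) ∧
  (∀ (c : ℂ), ∀ x ∈ S, θ (c • x) = c • θ x) ∧
  (∀ x ∈ S, θ (star x) = star (θ x))

/-- The corner `p S p` of a set of operators. -/
def corner (p : Op H) (S : Set (Op H)) : Set (Op H) :=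
  {x | x ∈ S ∧ p * x * p = x}

/-- Popa's intertwining relation: a corner of `P` embeds into `Q` inside `M`,
written `P ≺_M Q`: there are nonzero projections `p ∈ P`, `q ∈ Q`, a
*-homomorphism `θ : pPp → qQq` and a nonzero partial isometry `v ∈ qMp` with
`θ(x) v = v x` for all `x ∈ pPp`. -/
def CornerEmbeds (P Q M : Set (Op H)) : Prop :=
  ∃ (p q v : Op H) (θ : Op H → Op H),
    p ∈ P ∧ IsProjection p ∧ p ≠ 0 ∧
    q ∈ Q ∧ IsProjection q ∧ q ≠ 0 ∧
    IsStarHomOn θ (corner p P) (corner q Q) ∧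
    v ∈ M ∧ v ≠ 0 ∧ IsProjection (star v * v) ∧ q * v * p = v ∧
    ∀ x ∈ corner p P, θ x * v = v * x

/-- `E` is the (`τ`-preserving) conditional expectation from `M` onto `Q`. -/
structure IsCondExp (τ : Op H →ₗ[ℂ] ℂ) (M Q : Set (Op H)) (E : Op H → Op H) : Prop where
  mem : ∀ x ∈ M, E x ∈ Q
  fix : ∀ q ∈ Q, E q = q
  map_add : ∀ x ∈ M, ∀ y ∈ M, E (x + y) = E x + E y
  map_smul : ∀ (c : ℂ), ∀ x ∈ M, E (c • x) = c • E x
  bimod : ∀ a ∈ Q, ∀ x ∈ M, ∀ b ∈ Q, E (a * x * b) = a * E x * b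
  tr : ∀ x ∈ M, τ (E x) = τ x

/-- `c` is a Pimsner–Popa bound for the inclusion `Q ⊆ M` with conditional
expectation `E`: every positive `x ∈ M` satisfies `x ≤ c E(x)`. -/
def IndexBound (M : Set (Op H)) (E : Op H → Op H) (c : ℝ) : Prop :=
  ∀ x ∈ M, x.IsPositive → (c • E x - x).IsPositive

/-- The inclusion `Q ⊆ M` (with conditional expectation `E`) has finite Jones index. -/
def HasFiniteIndex (M : Set (Op H)) (E : Op H → Op H) : Prop :=
  ∃ c : ℝ, 0 < c ∧ IndexBound M E c

/-- The Jones index `[M : Q]` of an inclusion `Q ⊆ M` with conditional expectation `E`,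
via the Pimsner–Popa characterization as the optimal constant `c` with
`x ≤ c E(x)` for all positive `x ∈ M`. -/
noncomputable def jonesIndex (M : Set (Op H)) (E : Op H → Op H) : ℝ :=
  sInf {c : ℝ | 0 < c ∧ IndexBound M E c}


/-! ### Auxiliary lemmas for the proof -/

section PolarAux

open scoped InnerProductSpace

variable {H : Type u} [NormedAddCommGroup H] [InnerProductSpace ℂ H] [CompleteSpace H]

lemma cfc_mem_elemental (s : Op H) (hs : IsSelfAdjoint s) (f : ℝ → ℝ) :
    cfc f s ∈ StarAlgebra.elemental ℂ s := by
  rw [cfc_real_eq_complex f hs]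
  by_cases hf : ContinuousOn (fun x : ℂ => (f x.re : ℂ)) (spectrum ℂ s)
  · have hn : IsStarNormal s := hs.isStarNormal
    rw [cfc_apply (fun x : ℂ => (f x.re : ℂ)) s, cfcHom_eq_of_isStarNormal]
    exact ((continuousFunctionalCalculus s) _).2
  · rw [cfc_apply_of_not_continuousOn s hf]
    exact zero_mem _

lemma commute_cfc (s T : Op H) (hs : IsSelfAdjoint s) (h : T * s = s * T) (f : ℝ → ℝ) :
    T * cfc f s = cfc f s * T := by
  have key : ∀ y ∈ StarAlgebra.elemental ℂ s, T * y = y * T := by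
    intro y hy
    induction hy using StarAlgebra.elemental.induction_on with
    | self => exact h
    | star_self => rw [hs.star_eq]; exact h
    | algebraMap r =>
        rw [Algebra.algebraMap_eq_smul_one, mul_smul_comm, smul_mul_assoc, mul_one, one_mul]
    | add u hu v hv pu pv => rw [mul_add, add_mul, pu, pv]
    | mul u hu v hv pu pv => rw [← mul_assoc, pu, mul_assoc, pv, ← mul_assoc]
    | closure S hS hP z hz =>
        have hcl : IsClosed {y : Op H | T * y = y * T} := by
          apply isClosed_eq
          · exact continuous_const.mul continuous_id
          · exact continuous_id.mul continuous_const
        exact closure_minimal (fun u hu => hP u hu) hcl hz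
  exact key _ (cfc_mem_elemental s hs f)

/-- Polar decomposition, packaged for our purposes: given a nonzero operator `v`, there is a
nonzero partial isometry `w` with the same intertwining and support properties as `v`. -/
lemma polar_decomp (v : Op H) (hv : v ≠ 0) :
    ∃ w : Op H, w ≠ 0 ∧ IsSelfAdjoint (star w * w) ∧ IsIdempotentElem (star w * w) ∧
      (∀ x y : Op H, x * (star v * v) = (star v * v) * x → y * v = v * x →
        y * w = w * x) ∧
      (∀ x : Op H, x * (star v * v) = (star v * v) * x → v * x = v → w * x = w) := by
  set s : Op H := star v * v with hs_def
  have hs : IsSelfAdjoint s := IsSelfAdjoint.star_mul_self v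
  have hspec : ∀ t ∈ spectrum ℝ s, 0 ≤ t := fun t ht => spectrum_star_mul_self_nonneg t ht
  set a : Op H := cfc Real.sqrt s with ha_def
  have ha : IsSelfAdjoint a := IsSelfAdjoint.cfc
  have haa : a * a = s := by
    rw [ha_def, ← cfc_mul Real.sqrt Real.sqrt s Real.continuous_sqrt.continuousOn
      Real.continuous_sqrt.continuousOn,
      cfc_congr (g := fun t : ℝ => t) (fun t ht => Real.mul_self_sqrt (hspec t ht)),
      cfc_id' ℝ s]
  have hadj : ∀ (b : Op H), IsSelfAdjoint b → ∀ η η' : H,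
      ⟪(b * b) η, η'⟫_ℂ = ⟪b η, b η'⟫_ℂ := by
    intro b hb η η'
    rw [ContinuousLinearMap.mul_apply]
    have h := ContinuousLinearMap.adjoint_inner_left b η' (b η)
    rw [hb.adjoint_eq] at h
    exact h
  have hvv : ∀ η η' : H, ⟪v η, v η'⟫_ℂ = ⟪a η, a η'⟫_ℂ := by
    intro η η'
    have h1 : ⟪s η, η'⟫_ℂ = ⟪v η, v η'⟫_ℂ := by
      rw [hs_def, ContinuousLinearMap.mul_apply, ContinuousLinearMap.star_eq_adjoint]
      exact ContinuousLinearMap.adjoint_inner_left v η' (v η)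
    rw [← h1, ← haa, hadj a ha]
  have hnorm : ∀ η : H, ‖v η‖ = ‖a η‖ := by
    intro η
    rw [@norm_eq_sqrt_re_inner ℂ, @norm_eq_sqrt_re_inner ℂ, hvv]
  set fm : ℕ → ℝ → ℝ := fun m t => (Real.sqrt t + ((m : ℝ) + 1)⁻¹)⁻¹ with hfm_def
  have hden : ∀ (m : ℕ) (t : ℝ), Real.sqrt t + ((m : ℝ) + 1)⁻¹ ≠ 0 := by
    intro m t
    have h1 : 0 ≤ Real.sqrt t := Real.sqrt_nonneg t
    have h2 : 0 < ((m : ℝ) + 1)⁻¹ := by positivity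
    positivity
  have hcont : ∀ m : ℕ, Continuous (fm m) := by
    intro m
    exact (Real.continuous_sqrt.add continuous_const).inv₀ (hden m)
  set D : ℕ → Op H := fun m => cfc (fm m) s with hD_def
  set G : ℕ → Op H := fun m => cfc (fun t => Real.sqrt t * fm m t) s with hG_def
  set W : ℕ → Op H := fun m => v * D m with hW_def
  have haD : ∀ m, a * D m = G m := fun m =>
    (cfc_mul Real.sqrt (fm m) s Real.continuous_sqrt.continuousOn (hcont m).continuousOn).symm
  have hDa : ∀ m, D m * a = G m := by
    intro m
    rw [← cfc_mul (fm m) Real.sqrt s (hcont m).continuousOn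
      Real.continuous_sqrt.continuousOn]
    exact cfc_congr fun t _ => mul_comm _ _
  have hGle : ∀ m, ‖G m‖ ≤ 1 := by
    intro m
    apply norm_cfc_le zero_le_one
    intro t ht
    have h0 : 0 ≤ Real.sqrt t := Real.sqrt_nonneg t
    have h2 : 0 < ((m : ℝ) + 1)⁻¹ := by positivity
    rw [← div_eq_mul_inv, Real.norm_eq_abs, abs_div, abs_of_nonneg h0,
      abs_of_pos (by linarith : (0:ℝ) < Real.sqrt t + ((m : ℝ) + 1)⁻¹)]
    rw [div_le_one (by linarith)]
    linarith
  have hGa : ∀ m, ‖G m * a - a‖ ≤ ((m : ℝ) + 1)⁻¹ := by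
    intro m
    have e1 : G m * a = cfc (fun t => Real.sqrt t * fm m t * Real.sqrt t) s :=
      (cfc_mul _ Real.sqrt s ((Real.continuous_sqrt.mul (hcont m)).continuousOn)
        Real.continuous_sqrt.continuousOn).symm
    have e2 : G m * a - a = cfc (fun t => Real.sqrt t * fm m t * Real.sqrt t - Real.sqrt t) s := by
      rw [e1, ← cfc_sub (fun t => Real.sqrt t * fm m t * Real.sqrt t) Real.sqrt s
        ((Real.continuous_sqrt.mul (hcont m)).mul Real.continuous_sqrt).continuousOn
        Real.continuous_sqrt.continuousOn]
    rw [e2]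
    apply norm_cfc_le (by positivity)
    intro t ht
    have h0 : 0 ≤ Real.sqrt t := Real.sqrt_nonneg t
    have h2 : 0 < ((m : ℝ) + 1)⁻¹ := by positivity
    have hd : 0 < Real.sqrt t + ((m : ℝ) + 1)⁻¹ := by linarith
    have key : Real.sqrt t * fm m t * Real.sqrt t - Real.sqrt t
        = -(Real.sqrt t * ((m : ℝ) + 1)⁻¹ / (Real.sqrt t + ((m : ℝ) + 1)⁻¹)) := by
      rw [hfm_def]
      field_simp
      ring
    rw [Real.norm_eq_abs, key, abs_neg, abs_of_nonneg (by positivity)]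
    rw [div_le_iff₀ hd]
    nlinarith
  have hWnorm : ∀ (m : ℕ) (ξ : H), ‖W m ξ‖ = ‖G m ξ‖ := by
    intro m ξ
    rw [hW_def]
    show ‖v (D m ξ)‖ = ‖G m ξ‖
    rw [hnorm (D m ξ), ← ContinuousLinearMap.mul_apply, haD m]
  have hWG : ∀ (m l : ℕ) (ξ : H), ‖W m ξ - W l ξ‖ = ‖G m ξ - G l ξ‖ := by
    intro m l ξ
    have e1 : W m ξ - W l ξ = v (D m ξ - D l ξ) := by
      rw [map_sub]; rfl
    have e2 : a (D m ξ - D l ξ) = G m ξ - G l ξ := by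
      rw [map_sub, ← ContinuousLinearMap.mul_apply a, ← ContinuousLinearMap.mul_apply a,
        haD m, haD l]
    rw [e1, hnorm, e2]
  have hWa : ∀ (m : ℕ) (η : H), ‖W m (a η) - v η‖ ≤ ((m : ℝ) + 1)⁻¹ * ‖η‖ := by
    intro m η
    have e1 : W m (a η) - v η = v (D m (a η) - η) := by rw [map_sub]; rfl
    have e2 : a (D m (a η) - η) = (G m * a - a) η := by
      rw [map_sub, ← ContinuousLinearMap.mul_apply a, haD m]
      simp [ContinuousLinearMap.sub_apply, ContinuousLinearMap.mul_apply]
    rw [e1, hnorm, e2]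
    exact le_trans ((G m * a - a).le_opNorm η)
      (mul_le_mul_of_nonneg_right (hGa m) (norm_nonneg η))
  have hWker : ∀ ξ : H, a ξ = 0 → ∀ m, W m ξ = 0 := by
    intro ξ hξ m
    have : ‖W m ξ‖ = 0 := by
      rw [hWnorm m ξ, ← hDa m, ContinuousLinearMap.mul_apply, hξ, map_zero, norm_zero]
    simpa using norm_eq_zero.mp this
  set K : Submodule ℂ H := (LinearMap.range (a : H →ₗ[ℂ] H)).topologicalClosure with hK_def
  have hKclosed : IsClosed (K : Set H) := (LinearMap.range (a : H →ₗ[ℂ] H)).isClosed_topologicalClosure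
  haveI : CompleteSpace K := hKclosed.completeSpace_coe
  have hranK : ∀ η : H, a η ∈ K :=
    fun η => (LinearMap.range (a : H →ₗ[ℂ] H)).le_topologicalClosure (LinearMap.mem_range_self _ η)
  have hKbot : ∀ ξ ∈ Kᗮ, a ξ = 0 := by
    intro ξ hξ
    rw [Submodule.mem_orthogonal] at hξ
    have h1 : ⟪a (a ξ), ξ⟫_ℂ = 0 := hξ _ (hranK (a ξ))
    have h2 : ⟪a (a ξ), ξ⟫_ℂ = ⟪a ξ, a ξ⟫_ℂ := by
      have h := ContinuousLinearMap.adjoint_inner_left a ξ (a ξ)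
      rw [ha.adjoint_eq] at h
      exact h
    rw [h2] at h1
    exact inner_self_eq_zero.mp h1
  have hconv : ∀ ξ : H, ∃ L : H, Tendsto (fun m => W m ξ) atTop (nhds L) := by
    intro ξ
    obtain ⟨ξ₁, hξ₁, ξ₂, hξ₂, rfl⟩ := K.exists_add_mem_mem_orthogonal ξ
    have hW2 : ∀ m, W m (ξ₁ + ξ₂) = W m ξ₁ := by
      intro m
      rw [map_add, hWker ξ₂ (hKbot ξ₂ hξ₂) m, add_zero]
    have hcs : CauchySeq (fun m => W m ξ₁) := by
      rw [Metric.cauchySeq_iff]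
      intro ε hε
      have hξK : ξ₁ ∈ closure ((LinearMap.range (a : H →ₗ[ℂ] H) : Submodule ℂ H) : Set H) := hξ₁
      obtain ⟨z, hz, hzd⟩ := Metric.mem_closure_iff.mp hξK (ε / 4) (by positivity)
      obtain ⟨η, rfl⟩ := LinearMap.mem_range.mp hz
      obtain ⟨N, hN⟩ := exists_nat_one_div_lt
        (show (0:ℝ) < ε / (4 * (‖η‖ + 1)) by positivity)
      refine ⟨N, fun m hm l hl => ?_⟩
      have hf : ∀ j : ℕ, N ≤ j → ((j : ℝ) + 1)⁻¹ * ‖η‖ < ε / 4 := by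
        intro j hj
        have h1 : ((j : ℝ) + 1)⁻¹ ≤ ((N : ℝ) + 1)⁻¹ := by
          apply inv_anti₀ (by positivity)
          have : (N : ℝ) ≤ (j : ℝ) := Nat.cast_le.mpr hj
          linarith
        have h2 : ((N : ℝ) + 1)⁻¹ < ε / (4 * (‖η‖ + 1)) := by
          rwa [one_div] at hN
        have h3 : ((j : ℝ) + 1)⁻¹ * ‖η‖ ≤ ((N : ℝ) + 1)⁻¹ * (‖η‖ + 1) := by
          apply mul_le_mul h1 (by linarith) (norm_nonneg η) (by positivity)
        have h4 : ((N : ℝ) + 1)⁻¹ * (‖η‖ + 1) < ε / (4 * (‖η‖ + 1)) * (‖η‖ + 1) := by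
          apply mul_lt_mul_of_pos_right h2 (by positivity)
        have h5 : ε / (4 * (‖η‖ + 1)) * (‖η‖ + 1) = ε / 4 := by
          field_simp
        linarith
      have hdist : dist (W m ξ₁) (W l ξ₁) = ‖G m ξ₁ - G l ξ₁‖ := by
        rw [dist_eq_norm, hWG]
      rw [hdist]
      have hsplit : G m ξ₁ - G l ξ₁ =
          G m (ξ₁ - a η) + ((G m * a - a) η - ((G l * a - a) η)) + G l (a η - ξ₁) := by
        simp only [ContinuousLinearMap.sub_apply, ContinuousLinearMap.mul_apply,
          map_sub, ContinuousLinearMap.one_apply]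
        abel
      have hb1 : ‖G m (ξ₁ - a η)‖ < ε / 4 := by
        calc ‖G m (ξ₁ - a η)‖ ≤ ‖G m‖ * ‖ξ₁ - a η‖ := (G m).le_opNorm _
          _ ≤ 1 * ‖ξ₁ - a η‖ := mul_le_mul_of_nonneg_right (hGle m) (norm_nonneg _)
          _ = dist ξ₁ (a η) := by rw [one_mul, dist_eq_norm]
          _ < ε / 4 := hzd
      have hb2 : ‖G l (a η - ξ₁)‖ < ε / 4 := by
        calc ‖G l (a η - ξ₁)‖ ≤ ‖G l‖ * ‖a η - ξ₁‖ := (G l).le_opNorm _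
          _ ≤ 1 * ‖a η - ξ₁‖ := mul_le_mul_of_nonneg_right (hGle l) (norm_nonneg _)
          _ = dist ξ₁ (a η) := by rw [one_mul, norm_sub_rev, dist_eq_norm]
          _ < ε / 4 := hzd
      have hb3 : ‖(G m * a - a) η‖ < ε / 4 :=
        lt_of_le_of_lt (le_trans ((G m * a - a).le_opNorm η)
          (mul_le_mul_of_nonneg_right (hGa m) (norm_nonneg η))) (hf m hm)
      have hb4 : ‖(G l * a - a) η‖ < ε / 4 :=
        lt_of_le_of_lt (le_trans ((G l * a - a).le_opNorm η)
          (mul_le_mul_of_nonneg_right (hGa l) (norm_nonneg η))) (hf l hl)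
      calc ‖G m ξ₁ - G l ξ₁‖
          ≤ ‖G m (ξ₁ - a η)‖ + ‖(G m * a - a) η - (G l * a - a) η‖ + ‖G l (a η - ξ₁)‖ := by
            rw [hsplit]; exact norm_add₃_le
        _ ≤ ‖G m (ξ₁ - a η)‖ + (‖(G m * a - a) η‖ + ‖(G l * a - a) η‖) + ‖G l (a η - ξ₁)‖ := by
            have := norm_sub_le ((G m * a - a) η) ((G l * a - a) η)
            linarith
        _ < ε := by linarith
    obtain ⟨L, hL⟩ := cauchySeq_tendsto_of_complete hcs
    refine ⟨L, ?_⟩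
    have heq : (fun m => W m (ξ₁ + ξ₂)) = fun m => W m ξ₁ := funext hW2
    rw [heq]
    exact hL
  choose L hL using hconv
  have hLadd : ∀ ξ ζ : H, L (ξ + ζ) = L ξ + L ζ := by
    intro ξ ζ
    refine tendsto_nhds_unique (hL (ξ + ζ)) ?_
    have heq : (fun m => W m (ξ + ζ)) = fun m => W m ξ + W m ζ := by
      funext m; rw [map_add]
    rw [heq]
    exact (hL ξ).add (hL ζ)
  have hLsmul : ∀ (c : ℂ) (ξ : H), L (c • ξ) = c • L ξ := by
    intro c ξ
    refine tendsto_nhds_unique (hL (c • ξ)) ?_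
    have heq : (fun m => W m (c • ξ)) = fun m => c • W m ξ := by
      funext m; rw [map_smul]
    rw [heq]
    exact (hL ξ).const_smul c
  have hLbound : ∀ ξ : H, ‖L ξ‖ ≤ 1 * ‖ξ‖ := by
    intro ξ
    refine le_of_tendsto' (hL ξ).norm fun m => ?_
    rw [hWnorm m ξ]
    calc ‖G m ξ‖ ≤ ‖G m‖ * ‖ξ‖ := (G m).le_opNorm ξ
      _ ≤ 1 * ‖ξ‖ := mul_le_mul_of_nonneg_right (hGle m) (norm_nonneg ξ)
  set w : Op H := LinearMap.mkContinuous
    { toFun := L, map_add' := hLadd, map_smul' := hLsmul } 1 hLbound with hw_def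
  have hwtendsto : ∀ ξ : H, Tendsto (fun m => W m ξ) atTop (nhds (w ξ)) := fun ξ => hL ξ
  have hwa : ∀ η : H, w (a η) = v η := by
    intro η
    refine tendsto_nhds_unique (hwtendsto (a η)) ?_
    rw [tendsto_iff_norm_sub_tendsto_zero]
    have hb : ∀ m : ℕ, ‖W m (a η) - v η‖ ≤ ((m : ℝ) + 1)⁻¹ * ‖η‖ := fun m => hWa m η
    have h0 : Tendsto (fun m : ℕ => ((m : ℝ) + 1)⁻¹ * ‖η‖) atTop (nhds 0) := by
      have := tendsto_one_div_add_atTop_nhds_zero_nat.mul_const ‖η‖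
      rw [zero_mul] at this
      simpa [one_div] using this
    exact squeeze_zero (fun m => norm_nonneg _) hb h0
  have hwker : ∀ ξ : H, a ξ = 0 → w ξ = 0 := by
    intro ξ hξ
    refine tendsto_nhds_unique (hwtendsto ξ) ?_
    have heq : (fun m => W m ξ) = fun _ => (0 : H) := funext fun m => hWker ξ hξ m
    rw [heq]
    exact tendsto_const_nhds
  have hw0 : w ≠ 0 := by
    obtain ⟨η, hη⟩ : ∃ η, v η ≠ 0 := by
      by_contra h
      push_neg at h
      exact hv (ContinuousLinearMap.ext fun η => by simpa using h η)
    intro hw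
    apply hη
    rw [← hwa η, hw]
    rfl
  have hcomm : ∀ x y : Op H, x * s = s * x → y * v = v * x → y * w = w * x := by
    intro x y hx hy
    have hxD : ∀ m, x * D m = D m * x := fun m => commute_cfc s x hs hx (fm m)
    have hWc : ∀ m, y * W m = W m * x := by
      intro m
      rw [hW_def]
      calc y * (v * D m) = (v * x) * D m := by rw [← mul_assoc, hy]
        _ = v * (D m * x) := by rw [mul_assoc, ← hxD m]
        _ = (v * D m) * x := by rw [mul_assoc]
    ext ξ
    have h1 : Tendsto (fun m => y (W m ξ)) atTop (nhds (y (w ξ))) :=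
      (y.continuous.tendsto (w ξ)).comp (hwtendsto ξ)
    have h2 : (fun m => y (W m ξ)) = fun m => W m (x ξ) := by
      funext m
      have := congrArg (fun T : Op H => T ξ) (hWc m)
      simpa [ContinuousLinearMap.mul_apply] using this
    rw [h2] at h1
    exact tendsto_nhds_unique h1 (hwtendsto (x ξ))
  have hright : ∀ x : Op H, x * s = s * x → v * x = v → w * x = w := by
    intro x hx hvx
    have hxD : ∀ m, x * D m = D m * x := fun m => commute_cfc s x hs hx (fm m)
    have hWc : ∀ m, W m * x = W m := by
      intro m
      rw [hW_def]
      calc (v * D m) * x = v * (x * D m) := by rw [mul_assoc, ← hxD m]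
        _ = (v * x) * D m := by rw [mul_assoc]
        _ = v * D m := by rw [hvx]
    ext ξ
    have h2 : (fun m => W m (x ξ)) = fun m => W m ξ := by
      funext m
      have := congrArg (fun T : Op H => T ξ) (hWc m)
      simpa [ContinuousLinearMap.mul_apply] using this
    have h1 := hwtendsto (x ξ)
    rw [h2] at h1
    exact tendsto_nhds_unique h1 (hwtendsto ξ)
  have hinner0 : ∀ η η' : H, ⟪w (a η), w (a η')⟫_ℂ = ⟪a η, a η'⟫_ℂ := by
    intro η η'
    rw [hwa η, hwa η', hvv]
  have hinnerK : ∀ ξ ∈ K, ∀ ζ ∈ K, ⟪w ξ, w ζ⟫_ℂ = ⟪ξ, ζ⟫_ℂ := by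
    have step1 : ∀ η : H, ∀ ζ ∈ K, ⟪w (a η), w ζ⟫_ℂ = ⟪a η, ζ⟫_ℂ := by
      intro η ζ hζ
      have hcl : IsClosed {ζ : H | ⟪w (a η), w ζ⟫_ℂ = ⟪a η, ζ⟫_ℂ} := by
        apply isClosed_eq
        · exact Continuous.inner continuous_const w.continuous
        · exact Continuous.inner continuous_const continuous_id
      have hsub : ((LinearMap.range (a : H →ₗ[ℂ] H) : Submodule ℂ H) : Set H) ⊆
          {ζ : H | ⟪w (a η), w ζ⟫_ℂ = ⟪a η, ζ⟫_ℂ} := by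
        rintro ζ ⟨η', rfl⟩
        exact hinner0 η η'
      exact closure_minimal hsub hcl hζ
    intro ξ hξ ζ hζ
    have hcl : IsClosed {ξ : H | ⟪w ξ, w ζ⟫_ℂ = ⟪ξ, ζ⟫_ℂ} := by
      apply isClosed_eq
      · exact Continuous.inner w.continuous continuous_const
      · exact Continuous.inner continuous_id continuous_const
    have hsub : ((LinearMap.range (a : H →ₗ[ℂ] H) : Submodule ℂ H) : Set H) ⊆
        {ξ : H | ⟪w ξ, w ζ⟫_ℂ = ⟪ξ, ζ⟫_ℂ} := by
      rintro ξ ⟨η, rfl⟩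
      exact step1 η ζ hζ
    exact closure_minimal hsub hcl hξ
  have hwbot : ∀ ζ ∈ Kᗮ, w ζ = 0 := fun ζ hζ => hwker ζ (hKbot ζ hζ)
  have hwwadj : ∀ ξ ζ : H, ⟪(star w * w) ξ, ζ⟫_ℂ = ⟪w ξ, w ζ⟫_ℂ := by
    intro ξ ζ
    rw [ContinuousLinearMap.mul_apply, ContinuousLinearMap.star_eq_adjoint]
    exact ContinuousLinearMap.adjoint_inner_left w ζ (w ξ)
  have hfix : ∀ ξ ∈ K, (star w * w) ξ = ξ := by
    intro ξ hξ
    apply ext_inner_right ℂ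
    intro ζ
    rw [hwwadj]
    obtain ⟨ζ₁, hζ₁, ζ₂, hζ₂, rfl⟩ := K.exists_add_mem_mem_orthogonal ζ
    rw [map_add, hwbot ζ₂ hζ₂, add_zero, hinnerK ξ hξ ζ₁ hζ₁, inner_add_right,
      (K.mem_orthogonal ζ₂).mp hζ₂ ξ hξ, add_zero]
  have hzero : ∀ ξ ∈ Kᗮ, (star w * w) ξ = 0 := by
    intro ξ hξ
    rw [ContinuousLinearMap.mul_apply, hwbot ξ hξ, map_zero]
  have hidem : IsIdempotentElem (star w * w) := by
    rw [IsIdempotentElem]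
    ext ξ
    obtain ⟨ξ₁, hξ₁, ξ₂, hξ₂, rfl⟩ := K.exists_add_mem_mem_orthogonal ξ
    have e : (star w * w) (ξ₁ + ξ₂) = ξ₁ := by
      rw [map_add, hfix ξ₁ hξ₁, hzero ξ₂ hξ₂, add_zero]
    rw [ContinuousLinearMap.mul_apply, e, hfix ξ₁ hξ₁]
  exact ⟨w, hw0, IsSelfAdjoint.star_mul_self w, hidem, hcomm, hright⟩

end PolarAux

set_option maxHeartbeats 1000000 in
set_option synthInstance.maxHeartbeats 1000000 in
/-- Let `M` be a hyperfinite II₁ factor, the weak closure of an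
ascending sequence of subfactors `M n ≅ M_{2^n}(ℂ)` with `M = M_n ⊗̄ (M_n' ∩ M)` for
every `n` (generation plus factorization of the trace), and let `N ⊆ M` be a von
Neumann subalgebra with `M ⊀_M N`. Then `M_n' ∩ M ⊀_M N` for every `n`. -/
theorem relComm_matrix_no_embed
    {H : Type u} [NormedAddCommGroup H] [InnerProductSpace ℂ H] [CompleteSpace H]
    (M N : VonNeumannAlgebra H) (τ : Op H →ₗ[ℂ] ℂ)
    (A : ℕ → StarSubalgebra ℂ (Op H))
    (hM : IsII1Factor M τ)
    (hmono : Monotone A)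
    (hAM : ∀ n, (A n : Set (Op H)) ⊆ (M : Set (Op H)))
    (hmatrix : ∀ n, Nonempty ((A n) ≃⋆ₐ[ℂ] Matrix (Fin (2 ^ n)) (Fin (2 ^ n)) ℂ))
    (hdense : Set.centralizer (Set.centralizer (⋃ n, (A n : Set (Op H)))) =
      (M : Set (Op H)))
    (htensor : ∀ n, Set.centralizer (Set.centralizer
      ((A n : Set (Op H)) ∪ relComm (A n : Set (Op H)) (M : Set (Op H)))) =
        (M : Set (Op H)))
    (htrace : ∀ n, ∀ a ∈ (A n : Set (Op H)),
      ∀ b ∈ relComm (A n : Set (Op H)) (M : Set (Op H)), τ (a * b) = τ a * τ b)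
    (hNM : (N : Set (Op H)) ⊆ (M : Set (Op H)))
    (hno : ¬ CornerEmbeds (M : Set (Op H)) (N : Set (Op H)) (M : Set (Op H))) :
    ∀ n, ¬ CornerEmbeds (relComm (A n : Set (Op H)) (M : Set (Op H)))
      (N : Set (Op H)) (M : Set (Op H)) := by
  intro n hCE
  apply hno
  obtain ⟨p, q, v, θ, hpP, hpproj, hp0, hqN, hqproj, hq0, hθ, hvM, hv0, hviso, hqvp, hint⟩ := hCE
  obtain ⟨hθmap, hθadd, hθmul, hθsmul, hθstar⟩ := hθ
  obtain ⟨hpM, hpc⟩ := hpP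
  have hpsa : star p = p := hpproj.1
  have hpid : p * p = p := hpproj.2
  have hqid : q * q = q := hqproj.2
  -- matrix units
  have hψ := (hmatrix n).some
  set e : Fin (2 ^ n) → Fin (2 ^ n) → Op H :=
    fun i j => ((hψ.symm (Matrix.single i j 1) : A n) : Op H) with he_def
  have hemem : ∀ i j, e i j ∈ (A n : Set (Op H)) := fun i j => (hψ.symm _).2
  have heM : ∀ i j, e i j ∈ (M : Set (Op H)) := fun i j => hAM n (hemem i j)
  have hee : ∀ a b c d : Fin (2 ^ n), e a b * e c d = if b = c then e a d else 0 := by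
    intro a b c d
    by_cases h : b = c
    · subst h
      rw [if_pos rfl]
      have hstd : Matrix.single a b (1:ℂ) * Matrix.single b d 1
          = Matrix.single a d 1 := by
        rw [Matrix.single_mul_single_same, one_mul]
      show ((hψ.symm (Matrix.single a b 1) : A n) : Op H)
          * ((hψ.symm (Matrix.single b d 1) : A n) : Op H)
          = ((hψ.symm (Matrix.single a d 1) : A n) : Op H)
      rw [← MulMemClass.coe_mul, ← map_mul, hstd]
    · rw [if_neg h]
      have hstd : Matrix.single a b (1:ℂ) * Matrix.single c d 1 = 0 :=
        Matrix.single_mul_single_of_ne (c := (1:ℂ)) a b c h 1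
      show ((hψ.symm (Matrix.single a b 1) : A n) : Op H)
          * ((hψ.symm (Matrix.single c d 1) : A n) : Op H) = 0
      rw [← MulMemClass.coe_mul, ← map_mul, hstd, map_zero]
      exact ZeroMemClass.coe_zero _
  have hestar : ∀ i j, star (e i j) = e j i := by
    intro i j
    have hstd : star (Matrix.single i j (1:ℂ)) = Matrix.single j i 1 := by
      rw [Matrix.star_eq_conjTranspose]
      ext a b
      simp [Matrix.single, Matrix.conjTranspose_apply, and_comm]
    show star ((hψ.symm (Matrix.single i j 1) : A n) : Op H)
        = ((hψ.symm (Matrix.single j i 1) : A n) : Op H)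
    rw [show star ((hψ.symm (Matrix.single i j 1) : A n) : Op H)
      = ((star (hψ.symm (Matrix.single i j 1)) : A n) : Op H) from rfl,
      ← map_star, hstd]
  have hesum : (∑ j, e j j) = 1 := by
    have h1 : (∑ j : Fin (2 ^ n), Matrix.single j j (1:ℂ)) = 1 := by
      ext a b
      rw [Matrix.sum_apply]
      by_cases h : a = b
      · subst h
        rw [Matrix.one_apply_eq, Finset.sum_eq_single a]
        · simp [Matrix.single]
        · intro j _ hj
          simp [Matrix.single, hj]
        · intro ha
          exact absurd (Finset.mem_univ a) ha
      · rw [Matrix.one_apply_ne h]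
        refine Finset.sum_eq_zero fun j _ => ?_
        simp only [Matrix.single, Matrix.of_apply]
        rw [if_neg]
        rintro ⟨rfl, rfl⟩
        exact h rfl
    calc (∑ j, e j j)
        = ((∑ j, hψ.symm (Matrix.single j j 1) : A n) : Op H) :=
          (AddSubmonoidClass.coe_finset_sum _ _).symm
      _ = ((hψ.symm (∑ j, Matrix.single j j 1) : A n) : Op H) := by rw [map_sum]
      _ = 1 := by rw [h1, map_one]; exact OneMemClass.coe_one _
  -- commuting with all matrix units implies commuting with A n
  have hcommA : ∀ z : Op H, (∀ a b, e a b * z = z * e a b) →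
      ∀ y ∈ (A n : Set (Op H)), y * z = z * y := by
    intro z hz y hy
    set α := hψ ⟨y, hy⟩ with hα_def
    have h1 : (⟨y, hy⟩ : A n) = ∑ a, ∑ b, α a b • hψ.symm (Matrix.single a b 1) := by
      conv_lhs => rw [← hψ.symm_apply_apply ⟨y, hy⟩, ← hα_def,
        Matrix.matrix_eq_sum_single α]
      rw [map_sum]
      refine Finset.sum_congr rfl fun a _ => ?_
      rw [map_sum]
      refine Finset.sum_congr rfl fun b _ => ?_
      rw [show Matrix.single a b (α a b) = α a b • Matrix.single a b 1 by
        rw [Matrix.smul_single, smul_eq_mul, mul_one], map_smul]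
    have hdec : y = ∑ a, ∑ b, α a b • e a b := by
      have h2 := congrArg (fun u : A n => (u : Op H)) h1
      simpa [AddSubmonoidClass.coe_finset_sum] using h2
    calc y * z = (∑ a, ∑ b, α a b • e a b) * z := by rw [← hdec]
      _ = ∑ a, ∑ b, α a b • (e a b * z) := by
          rw [Finset.sum_mul]
          refine Finset.sum_congr rfl fun a _ => ?_
          rw [Finset.sum_mul]
          exact Finset.sum_congr rfl fun b _ => smul_mul_assoc _ _ _
      _ = ∑ a, ∑ b, α a b • (z * e a b) := by
          refine Finset.sum_congr rfl fun a _ => Finset.sum_congr rfl fun b _ => ?_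
          rw [hz a b]
      _ = z * (∑ a, ∑ b, α a b • e a b) := by
          rw [Finset.mul_sum]
          refine Finset.sum_congr rfl fun a _ => ?_
          rw [Finset.mul_sum]
          exact Finset.sum_congr rfl fun b _ => (mul_smul_comm _ _ _).symm
      _ = z * y := by rw [← hdec]
  -- basic consequences of q v p = v
  have hvp : v * p = v := by
    conv_lhs => rw [← hqvp]
    rw [mul_assoc (q * v) p p, hpid, hqvp]
  have hqv : q * v = v := by
    conv_lhs => rw [← hqvp]
    rw [← mul_assoc q (q * v) p, ← mul_assoc q q v, hqid, hqvp]
  -- choose the index i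
  have hvi : ∃ i, v * e i i * p ≠ 0 := by
    by_contra hall
    push_neg at hall
    apply hv0
    calc v = v * p := hvp.symm
      _ = v * ((∑ j, e j j) * p) := by rw [hesum, one_mul]
      _ = ∑ j, v * e j j * p := by
          rw [Finset.sum_mul, Finset.mul_sum]
          exact Finset.sum_congr rfl fun j _ => (mul_assoc v (e j j) p).symm
      _ = 0 := Finset.sum_eq_zero fun j _ => hall j
  obtain ⟨i, hvi⟩ := hvi
  obtain ⟨E, hE_def⟩ : ∃ E : Op H, E = e i i := ⟨_, rfl⟩
  have hEmem : E ∈ (A n : Set (Op H)) := by rw [hE_def]; exact hemem i i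
  have hEM : E ∈ (M : Set (Op H)) := hAM n hEmem
  have hEsa : star E = E := by rw [hE_def]; exact hestar i i
  have hEid : E * E = E := by rw [hE_def, hee, if_pos rfl]
  have hEp : E * p = p * E := hpc E hEmem
  have hcp : ∀ a b, p * e a b = e a b * p := fun a b => (hpc _ (hemem a b)).symm
  obtain ⟨p', hp'_def⟩ : ∃ p' : Op H, p' = E * p := ⟨_, rfl⟩
  obtain ⟨v', hv'_def⟩ : ∃ v' : Op H, v' = v * E := ⟨_, rfl⟩
  have hp'M : p' ∈ (M : Set (Op H)) := by rw [hp'_def]; exact mul_mem hEM hpM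
  have hv'M : v' ∈ (M : Set (Op H)) := by rw [hv'_def]; exact mul_mem hvM hEM
  have hp'sa : star p' = p' := by
    rw [hp'_def, star_mul, hEsa, hpsa, ← hEp]
  have hp'id : p' * p' = p' := by
    rw [hp'_def]
    calc (E * p) * (E * p) = E * (p * E) * p := by noncomm_ring
      _ = E * (E * p) * p := by rw [hEp]
      _ = (E * E) * (p * p) := by noncomm_ring
      _ = E * p := by rw [hEid, hpid]
  have hEp' : E * p' = p' := by
    rw [hp'_def, ← mul_assoc, hEid]
  have hp'E : p' * E = p' := by
    rw [hp'_def]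
    calc (E * p) * E = E * (p * E) := by noncomm_ring
      _ = E * (E * p) := by rw [hEp]
      _ = (E * E) * p := by noncomm_ring
      _ = E * p := by rw [hEid]
  have hpp' : p * p' = p' := by
    rw [hp'_def]
    calc p * (E * p) = (p * E) * p := by noncomm_ring
      _ = (E * p) * p := by rw [hEp]
      _ = E * (p * p) := by noncomm_ring
      _ = E * p := by rw [hpid]
  have hp'p : p' * p = p' := by rw [hp'_def, mul_assoc, hpid]
  have hv'0 : v' ≠ 0 := by
    intro h
    apply hvi
    calc v * e i i * p = v' * p := by rw [hv'_def, hE_def]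
      _ = 0 := by rw [h, zero_mul]
  have hv'p' : v' * p' = v' := by
    rw [hv'_def, hp'_def]
    calc (v * E) * (E * p) = v * (E * E) * p := by noncomm_ring
      _ = v * E * p := by rw [hEid]
      _ = v * (p * E) := by rw [mul_assoc, hEp]
      _ = (v * p) * E := by noncomm_ring
      _ = v * E := by rw [hvp]
  have hqv' : q * v' = v' := by rw [hv'_def, ← mul_assoc, hqv]
  -- the compression map
  obtain ⟨φ, hφ⟩ : ∃ φ : Op H → Op H, ∀ z, φ z = ∑ j, e j i * z * e i j :=
    ⟨fun z => ∑ j, e j i * z * e i j, fun _ => rfl⟩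
  have key1 : ∀ (a b : Fin (2 ^ n)) (z : Op H), e a b * φ z = e a i * z * e i b := by
    intro a b z
    rw [hφ z, Finset.mul_sum, Finset.sum_eq_single b]
    · rw [← mul_assoc, ← mul_assoc, hee, if_pos rfl]
    · intro j _ hj
      rw [← mul_assoc, ← mul_assoc, hee, if_neg (fun hh => hj hh.symm), zero_mul, zero_mul]
    · intro hb
      exact absurd (Finset.mem_univ b) hb
  have key2 : ∀ (a b : Fin (2 ^ n)) (z : Op H), φ z * e a b = e a i * z * e i b := by
    intro a b z
    rw [hφ z, Finset.sum_mul, Finset.sum_eq_single a]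
    · rw [mul_assoc, hee, if_pos rfl]
    · intro j _ hj
      rw [mul_assoc, hee, if_neg hj, mul_zero]
    · intro ha
      exact absurd (Finset.mem_univ a) ha
  have hφcomm : ∀ (z : Op H) (a b : Fin (2 ^ n)), e a b * φ z = φ z * e a b := by
    intro z a b
    rw [key1, key2]
  have hφE : ∀ z : Op H, φ z * E = E * φ z := by
    intro z
    rw [hE_def]
    exact (hφcomm z i i).symm
  have hφM : ∀ x ∈ (M : Set (Op H)), φ x ∈ (M : Set (Op H)) := by
    intro x hx
    rw [hφ x]
    exact sum_mem fun j _ => mul_mem (mul_mem (heM j i) hx) (heM i j)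
  -- properties of elements of the corner p' M p'
  have hcorn : ∀ x : Op H, p' * x * p' = x →
      E * x = x ∧ x * E = x ∧ p * x = x ∧ x * p = x := by
    intro x hx
    refine ⟨?_, ?_, ?_, ?_⟩
    · conv_lhs => rw [← hx]
      rw [← mul_assoc E (p' * x) p', ← mul_assoc E p' x, hEp', hx]
    · conv_lhs => rw [← hx]
      rw [mul_assoc (p' * x) p' E, hp'E, hx]
    · conv_lhs => rw [← hx]
      rw [← mul_assoc p (p' * x) p', ← mul_assoc p p' x, hpp', hx]
    · conv_lhs => rw [← hx]
      rw [mul_assoc (p' * x) p' p, hp'p, hx]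
  have hφcornP : ∀ x : Op H, x ∈ corner p' (M : Set (Op H)) →
      φ x ∈ corner p (relComm (A n : Set (Op H)) (M : Set (Op H))) := by
    intro x hx
    obtain ⟨hxM, hxc⟩ := hx
    obtain ⟨hEx, hxE, hpx, hxp⟩ := hcorn x hxc
    refine ⟨⟨hφM x hxM, fun y hy => hcommA (φ x) (fun a b => hφcomm x a b) y hy⟩, ?_⟩
    rw [hφ x, Finset.mul_sum, Finset.sum_mul]
    refine Finset.sum_congr rfl fun j _ => ?_
    calc p * (e j i * x * e i j) * p
        = (p * e j i) * (x * (e i j * p)) := by noncomm_ring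
      _ = (e j i * p) * (x * (p * e i j)) := by rw [hcp, hcp]
      _ = e j i * (p * x) * (p * e i j) := by noncomm_ring
      _ = e j i * x * (p * e i j) := by rw [hpx]
      _ = (e j i * (x * p)) * e i j := by noncomm_ring
      _ = e j i * x * e i j := by rw [hxp]
  have hxeq : ∀ x : Op H, p' * x * p' = x → E * φ x = x ∧ v' * φ x = v' * x := by
    intro x hx
    obtain ⟨hEx, hxE, hpx, hxp⟩ := hcorn x hx
    have h1 : E * φ x = x := by
      rw [hE_def, key1 i i x, ← hE_def, mul_assoc, hxE, hEx]
    refine ⟨h1, ?_⟩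
    rw [hv'_def]
    calc (v * E) * φ x = v * (E * φ x) := by noncomm_ring
      _ = v * x := by rw [h1]
      _ = v * (E * x) := by rw [hEx]
      _ = (v * E) * x := by noncomm_ring
  -- the corner of P is star-closed
  have hPstar : ∀ y : Op H, y ∈ corner p (relComm (A n : Set (Op H)) (M : Set (Op H))) →
      star y ∈ corner p (relComm (A n : Set (Op H)) (M : Set (Op H))) := by
    rintro y ⟨⟨hyM, hyc⟩, hpyp⟩
    refine ⟨⟨star_mem hyM, fun z hz => ?_⟩, ?_⟩
    · have h1 : star z * y = y * star z := hyc (star z) (star_mem hz)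
      calc z * star y = star (y * star z) := by rw [star_mul, star_star]
        _ = star (star z * y) := by rw [h1]
        _ = star y * z := by rw [star_mul, star_star]
    · have h4 : star (p * y * p) = p * star y * p := by
        rw [star_mul, star_mul, hpsa, ← mul_assoc]
      rw [← h4, hpyp]
  -- elements of the corner commute with star v * v
  have hrcomm : ∀ y : Op H, y ∈ corner p (relComm (A n : Set (Op H)) (M : Set (Op H))) →
      y * (star v * v) = (star v * v) * y := by
    intro y hy
    have hsy := hPstar y hy
    have h1 : θ (star y) * v = v * star y := hint (star y) hsy
    have h3 := congrArg star h1
    rw [star_mul, star_mul, star_star] at h3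
    rw [← hθstar (star y) hsy, star_star] at h3
    calc y * (star v * v) = (y * star v) * v := by rw [mul_assoc]
      _ = (star v * θ y) * v := by rw [← h3]
      _ = star v * (θ y * v) := by rw [mul_assoc]
      _ = star v * (v * y) := by rw [hint y hy]
      _ = (star v * v) * y := by rw [mul_assoc]
  -- relations for s' = star v' * v'
  have hps : p * (star v * v) = star v * v := by
    have h1 : star v = p * star v := by
      conv_lhs => rw [← hvp]
      rw [star_mul, hpsa]
    rw [← mul_assoc, ← h1]
  have hsp : (star v * v) * p = star v * v := by
    rw [mul_assoc, hvp]
  have hs'E : star v' * v' = E * (star v * v) * E := by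
    rw [hv'_def, star_mul, hEsa]
    noncomm_ring
  have hp's'1 : p' * (star v' * v') = star v' * v' := by
    rw [hs'E, hp'_def]
    calc (E * p) * (E * (star v * v) * E)
        = E * (p * E) * ((star v * v) * E) := by noncomm_ring
      _ = E * (E * p) * ((star v * v) * E) := by rw [hEp]
      _ = (E * E) * ((p * (star v * v)) * E) := by noncomm_ring
      _ = E * ((star v * v) * E) := by rw [hEid, hps]
      _ = E * (star v * v) * E := by noncomm_ring
  have hp's'2 : (star v' * v') * p' = star v' * v' := by
    rw [hs'E, hp'_def]
    calc (E * (star v * v) * E) * (E * p)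
        = E * (star v * v) * ((E * E) * p) := by noncomm_ring
      _ = E * (star v * v) * (E * p) := by rw [hEid]
      _ = E * (star v * v) * (p * E) := by rw [hEp]
      _ = E * ((star v * v) * p) * E := by noncomm_ring
      _ = E * (star v * v) * E := by rw [hsp]
  have hp's' : p' * (star v' * v') = (star v' * v') * p' := by
    rw [hp's'1, hp's'2]
  have hxs' : ∀ x : Op H, x ∈ corner p' (M : Set (Op H)) →
      x * (star v' * v') = (star v' * v') * x := by
    intro x hx
    obtain ⟨hxM, hxc⟩ := hx
    obtain ⟨hEx, hxE, hpx, hxp⟩ := hcorn x hxc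
    obtain ⟨hEφ, -⟩ := hxeq x hxc
    have hφP := hφcornP x ⟨hxM, hxc⟩
    have hφr : φ x * (star v * v) = (star v * v) * φ x := hrcomm (φ x) hφP
    calc x * (star v' * v')
        = x * (E * (star v * v) * E) := by rw [hs'E]
      _ = (x * E) * ((star v * v) * E) := by noncomm_ring
      _ = x * ((star v * v) * E) := by rw [hxE]
      _ = (E * φ x) * ((star v * v) * E) := by conv_lhs => rw [← hEφ]
      _ = E * ((φ x * (star v * v)) * E) := by noncomm_ring
      _ = E * (((star v * v) * φ x) * E) := by rw [hφr]
      _ = (E * (star v * v)) * (φ x * E) := by noncomm_ring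
      _ = (E * (star v * v)) * (E * φ x) := by rw [hφE x]
      _ = (E * (star v * v) * E) * φ x := by noncomm_ring
      _ = (E * (star v * v) * E) * (E * φ x) := by
          calc (E * (star v * v) * E) * φ x
              = (E * (star v * v)) * (E * φ x) := by noncomm_ring
            _ = (E * (star v * v)) * ((E * E) * φ x) := by rw [hEid]
            _ = (E * (star v * v) * E) * (E * φ x) := by noncomm_ring
      _ = (star v' * v') * x := by rw [← hs'E, hEφ]
  -- apply polar decomposition
  obtain ⟨w, hw0, hwsa, hwid, hwcomm, hwright⟩ := polar_decomp v' hv'0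
  have hwM : w ∈ (M : Set (Op H)) := by
    have hs'M : star v' * v' ∈ (M : Set (Op H)) := mul_mem (star_mem hv'M) hv'M
    have hcen : w ∈ Set.centralizer (Set.centralizer (M : Set (Op H))) := by
      intro T hT
      have h1 : T * v' = v' * T := (hT v' hv'M).symm
      have h2 : T * (star v' * v') = (star v' * v') * T := (hT _ hs'M).symm
      exact hwcomm T T h2 h1
    rw [M.centralizer_centralizer] at hcen
    exact hcen
  have hwp' : w * p' = w := hwright p' hp's' hv'p'
  have hqw : q * w = w := by
    have h1 : q * v' = v' * 1 := by rw [mul_one, hqv']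
    have h2 := hwcomm 1 q (by rw [one_mul, mul_one]) h1
    rw [mul_one] at h2
    exact h2
  have hqwp' : q * w * p' = w := by rw [hqw, hwp']
  have hwint : ∀ x : Op H, x ∈ corner p' (M : Set (Op H)) → θ (φ x) * w = w * x := by
    intro x hx
    obtain ⟨hEφ, hv'φ⟩ := hxeq x hx.2
    have hφP := hφcornP x hx
    have h1 : θ (φ x) * v' = v' * x := by
      rw [hv'_def]
      calc θ (φ x) * (v * E) = (θ (φ x) * v) * E := by noncomm_ring
        _ = (v * φ x) * E := by rw [hint (φ x) hφP]
        _ = v * (φ x * E) := by noncomm_ring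
        _ = v * (E * φ x) := by rw [hφE x]
        _ = (v * E) * φ x := by noncomm_ring
        _ = (v * E) * x := by rw [← hv'_def, hv'φ]
    exact hwcomm x (θ (φ x)) (hxs' x hx) h1
  -- assemble the corner embedding of M into N
  refine ⟨p', q, w, fun x => θ (φ x), hp'M, ⟨hp'sa, hp'id⟩, ?_, hqN, hqproj, hq0,
    ⟨?_, ?_, ?_, ?_, ?_⟩, hwM, hw0, ⟨hwsa, hwid⟩, hqwp', fun x hx => hwint x hx⟩
  · intro h
    apply hv'0
    rw [← hv'p', h, mul_zero]
  · intro x hx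
    exact hθmap (φ x) (hφcornP x hx)
  · intro x hx y hy
    show θ (φ (x + y)) = θ (φ x) + θ (φ y)
    have hφadd : φ (x + y) = φ x + φ y := by
      rw [hφ (x + y), hφ x, hφ y, ← Finset.sum_add_distrib]
      refine Finset.sum_congr rfl fun j _ => ?_
      rw [mul_add, add_mul]
    rw [hφadd]
    exact hθadd (φ x) (hφcornP x hx) (φ y) (hφcornP y hy)
  · intro x hx y hy
    show θ (φ (x * y)) = θ (φ x) * θ (φ y)
    have hφmul : φ (x * y) = φ x * φ y := by
      obtain ⟨hEx, hxE, hpx, hxp⟩ := hcorn x hx.2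
      have hEy : E * y = y := (hcorn y hy.2).1
      rw [hφ (x * y), hφ x, Finset.sum_mul]
      refine Finset.sum_congr rfl fun j _ => ?_
      calc e j i * (x * y) * e i j
          = e j i * (x * (E * y)) * e i j := by rw [hEy]
        _ = (e j i * (x * E)) * (y * e i j) := by noncomm_ring
        _ = (e j i * x) * (y * e i j) := by rw [hxE]
        _ = (e j i * x) * ((E * y) * e i j) := by rw [hEy]
        _ = (e j i * x) * (e i i * y * e i j) := by rw [hE_def]
        _ = (e j i * x) * (e i j * φ y) := by rw [key1 i j y]
        _ = (e j i * x * e i j) * φ y := by noncomm_ring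
    rw [hφmul]
    exact hθmul (φ x) (hφcornP x hx) (φ y) (hφcornP y hy)
  · intro c x hx
    show θ (φ (c • x)) = c • θ (φ x)
    have hφsmul : φ (c • x) = c • φ x := by
      rw [hφ (c • x), hφ x, Finset.smul_sum]
      refine Finset.sum_congr rfl fun j _ => ?_
      rw [mul_smul_comm, smul_mul_assoc]
    rw [hφsmul]
    exact hθsmul c (φ x) (hφcornP x hx)
  · intro x hx
    show θ (φ (star x)) = star (θ (φ x))
    have hφstar : φ (star x) = star (φ x) := by
      rw [hφ (star x), hφ x, star_sum]
      refine Finset.sum_congr rfl fun j _ => ?_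
      rw [star_mul, star_mul, hestar, hestar, ← mul_assoc]
    rw [hφstar]
    exact hθstar (φ x) (hφcornP x hx)


end PopaQ
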